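/- Let p > 3 be a prime. Let A be an 𝔽_p-brace whose additive group is a 4-dimensional 𝔽_p-vector space with basis P, Q, R, S, and suppose P, Q, R, S satisfy the Multiplicative Table with parameters y, i, k ∈ 𝔽_p, y ≠ 0. Then every element of A can be written in a unique way as R^α ∘ Q^β ∘ P^γ ∘ S^ξ with 0 ≤ α, β, γ, ξ < p, where g^n denotes the n-fold product g∘⋯∘g in the group (A,∘). -/

import Mathlib

/-- A left brace: `(A, +)` an abelian group, `(A, *)` a group (we write the brace
multiplication `∘` as `*`), with `a * (b + c) + a = a * b + a * c`. -/
class LeftBrace (A : Type*) extends Group A, AddCommGroup A where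
  mul_add_eq : ∀ a b c : A, a * (b + c) + a = a * b + a * c

namespace LeftBrace

/-- The star operation `a * b = a∘b - a - b` of a left brace. -/
def star {A : Type*} [LeftBrace A] (a b : A) : A := a * b - a - b

end LeftBrace

/-- An `𝔽ₚ`-brace: a left brace whose additive group is a `ZMod p`-vector space
with `a * (α • b) = α • (a * b)`. -/
class FpBrace (p : ℕ) (A : Type*) extends LeftBrace A, Module (ZMod p) A where
  star_smul' : ∀ (α : ZMod p) (a b : A),
    LeftBrace.star a (α • b) = α • LeftBrace.star a b

/-- The left chain `A^1 = A`, `A^{i+1} = A * A^i` (additive subgroup generated by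
`a * b`, `a ∈ A`, `b ∈ A^i`). -/
def lpow (A : Type*) [LeftBrace A] : ℕ → AddSubgroup A
  | 0 => ⊤
  | 1 => ⊤
  | (n+2) => AddSubgroup.closure
      {x : A | ∃ a : A, ∃ b ∈ lpow A (n+1), x = LeftBrace.star a b}

/-- The right chain `A^{(1)} = A`, `A^{(i+1)} = A^{(i)} * A`. -/
def rpow (A : Type*) [LeftBrace A] : ℕ → AddSubgroup A
  | 0 => ⊤
  | 1 => ⊤
  | (n+2) => AddSubgroup.closure
      {x : A | ∃ a ∈ rpow A (n+1), ∃ b : A, x = LeftBrace.star a b}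

/-- A left brace is right nilpotent if `A^{(n)} = 0` for some `n`. -/
def IsRightNilpotent (A : Type*) [LeftBrace A] : Prop := ∃ n, rpow A n = ⊥

/-- The defining relations of the group XV on generators `P, Q, R, S`. -/
def XVRelations {A : Type*} [LeftBrace A] (p : ℕ) (P Q R S : A) : Prop :=
  Q * S = S * Q * P ∧ Q * R = R * Q ∧ P * S = S * P ∧ P * Q = Q * P ∧
  P * R = R * P ∧ R * S = S * R * Q ∧
  P ^ p = 1 ∧ Q ^ p = 1 ∧ R ^ p = 1 ∧ S ^ p = 1

/-- The multiplicative group of the brace `A` is the group XV, with generators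
`P, Q, R, S` satisfying the XV relations. -/
def IsXVBrace (p : ℕ) (A : Type*) [LeftBrace A] (P Q R S : A) : Prop :=
  Nat.card A = p ^ 4 ∧ Subgroup.closure {P, Q, R, S} = ⊤ ∧ XVRelations p P Q R S


/-- The Multiplicative Table with parameters `y, i, k`. -/
def MultTable {p : ℕ} {A : Type*} [LeftBrace A] [Module (ZMod p) A]
    (P Q R S : A) (y i k : ZMod p) : Prop :=
  LeftBrace.star P P = 0 ∧ LeftBrace.star P Q = 0 ∧
  LeftBrace.star P R = y • S ∧ LeftBrace.star P S = 0 ∧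
  LeftBrace.star Q P = 0 ∧ LeftBrace.star Q Q = -(y • S) ∧
  LeftBrace.star Q R = ((2 : ZMod p)⁻¹ * y) • S ∧ LeftBrace.star Q S = 0 ∧
  LeftBrace.star R P = y • S ∧ LeftBrace.star R Q = ((2 : ZMod p)⁻¹ * y) • S ∧
  LeftBrace.star R R = i • P + k • S ∧ LeftBrace.star R S = 0 ∧
  LeftBrace.star S P = 0 ∧ LeftBrace.star S Q = -P ∧
  LeftBrace.star S R = -Q + P - ((2 : ZMod p)⁻¹ * y) • S ∧ LeftBrace.star S S = 0

/-- Additive subgroup generated by all `x * y`, `x ∈ X`, `y ∈ Y`. -/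
def starSpan {A : Type*} [LeftBrace A] (X Y : AddSubgroup A) : AddSubgroup A :=
  AddSubgroup.closure {z : A | ∃ x ∈ X, ∃ y ∈ Y, z = LeftBrace.star x y}

/-- An ideal of a left brace: an additive subgroup closed under all `λ_a` and
normal in `(A, ∘)`. -/
def IsBraceIdeal {A : Type*} [LeftBrace A] (I : AddSubgroup A) : Prop :=
  (∀ a : A, ∀ b ∈ I, a * b - a ∈ I) ∧ (∀ a : A, ∀ b ∈ I, a * b * a⁻¹ ∈ I)

/-- A brace is prime if the product of any two nonzero ideals is nonzero. -/
def IsPrimeBrace (A : Type*) [LeftBrace A] : Prop :=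
  ∀ I J : AddSubgroup A, IsBraceIdeal I → IsBraceIdeal J → I ≠ ⊥ → J ≠ ⊥ →
    starSpan I J ≠ ⊥

/-- Left chain of a nonassociative algebra given by a bilinear map. -/
def preLieL (R : Type*) [CommRing R] (V : Type*) [AddCommGroup V] [Module R V]
    (mul : V →ₗ[R] V →ₗ[R] V) : ℕ → Submodule R V
  | 0 => ⊤
  | 1 => ⊤
  | (n+2) => Submodule.span R
      {x : V | ∃ a : V, ∃ b ∈ preLieL R V mul (n+1), x = mul a b}

/-- Right chain of a nonassociative algebra given by a bilinear map. -/
def preLieR (R : Type*) [CommRing R] (V : Type*) [AddCommGroup V] [Module R V]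
    (mul : V →ₗ[R] V →ₗ[R] V) : ℕ → Submodule R V
  | 0 => ⊤
  | 1 => ⊤
  | (n+2) => Submodule.span R
      {x : V | ∃ a ∈ preLieR R V mul (n+1), ∃ b : V, x = mul a b}

/-- The defining relations of the group XIV on generators `P, Q, R, S`. -/
def XIVRelations {A : Type*} [LeftBrace A] (p : ℕ) (P Q R S : A) : Prop :=
  Q * P = P * Q ∧ Q * R = R * Q ∧ Q * S = S * Q ∧
  P * R = R * P ∧ P * S = S * P ∧ R * S = S * R * P ∧
  P ^ p = 1 ∧ Q ^ p = 1 ∧ R ^ p = 1 ∧ S ^ p = 1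

local notation "st" => LeftBrace.star

section Aux
variable {A : Type*} [LeftBrace A]

lemma my_mul_eq_add (a b : A) : a * b = a + b + st a b := by unfold LeftBrace.star; abel

lemma my_mul_add' (a b c : A) : a * (b + c) = a * b + a * c - a :=
  eq_sub_of_add_eq (LeftBrace.mul_add_eq a b c)

lemma my_star_add (a b c : A) : st a (b + c) = st a b + st a c := by
  unfold LeftBrace.star; rw [my_mul_add']; abel

lemma my_star_zero (a : A) : st a (0 : A) = 0 := by
  have h := my_star_add a 0 0
  rw [add_zero] at h
  exact (left_eq_add.mp h)

lemma my_star_neg (a b : A) : st a (-b) = - st a b := by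
  have h := my_star_add a b (-b)
  rw [add_neg_cancel, my_star_zero] at h
  exact (neg_eq_of_add_eq_zero_right h.symm).symm

lemma my_one_eq_zero : (1 : A) = 0 := by
  have h := LeftBrace.mul_add_eq (1 : A) 0 0
  simpa using h

lemma my_star_sub (a b c : A) : st a (b - c) = st a b - st a c := by
  rw [sub_eq_add_neg, my_star_add, my_star_neg, sub_eq_add_neg]

lemma my_star_mul_left (a b c : A) : st (a * b) c = st a c + st a (st b c) + st b c := by
  have e1 : b * c = b + (c + st b c) := by unfold LeftBrace.star; abel
  have e0 : st (a * b) c = a * (b * c) - a * b - c := by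
    unfold LeftBrace.star; rw [mul_assoc]
  rw [e0, e1, my_mul_add', my_mul_add']
  unfold LeftBrace.star
  abel
end Aux

section Aux2
variable {p : ℕ} {A : Type*} [FpBrace p A]

lemma my_star_smul (α : ZMod p) (a b : A) : st a (α • b) = α • st a b :=
  FpBrace.star_smul' α a b
end Aux2

section Pow
variable {p : ℕ} {A : Type*} [FpBrace p A]

lemma my_pow_nostar (a : A) (h : st a a = 0) (n : ℕ) : a ^ n = (n : ZMod p) • a := by
  induction n with
  | zero => simp [my_one_eq_zero]
  | succ n ih =>
    rw [pow_succ', my_mul_eq_add, ih, my_star_smul, h]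
    push_cast
    module

lemma my_pow_Q (Q S : A) (y : ZMod p) (hQQ : st Q Q = -(y • S)) (hQS : st Q S = 0) (n : ℕ) :
    Q ^ n = (n : ZMod p) • Q - ((n.choose 2 : ℕ) : ZMod p) • y • S := by
  induction n with
  | zero => simp [my_one_eq_zero]
  | succ n ih =>
    rw [pow_succ', my_mul_eq_add, ih, my_star_sub, my_star_smul, my_star_smul, my_star_smul,
      hQQ, hQS, Nat.choose_succ_succ, Nat.choose_one_right]
    push_cast
    module

lemma my_pow_R (P R S : A) (y i k : ZMod p) (hRR : st R R = i • P + k • S)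
    (hRP : st R P = y • S) (hRS : st R S = 0) (n : ℕ) :
    R ^ n = (n : ZMod p) • R + ((n.choose 2 : ℕ) : ZMod p) • i • P
      + ((n.choose 2 : ℕ) : ZMod p) • k • S + ((n.choose 3 : ℕ) : ZMod p) • (i * y) • S := by
  induction n with
  | zero => simp [my_one_eq_zero]
  | succ n ih =>
    rw [pow_succ', my_mul_eq_add, ih, my_star_add, my_star_add, my_star_add,
      my_star_smul, my_star_smul, my_star_smul, my_star_smul, my_star_smul, my_star_smul,
      my_star_smul, hRR, hRP, hRS, Nat.choose_succ_succ n 1, Nat.choose_succ_succ n 2,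
      Nat.choose_one_right]
    push_cast
    module

end Pow

section StarPow
variable {p : ℕ} {A : Type*} [FpBrace p A]

lemma my_star_one_left (b : A) : st (1 : A) b = 0 := by
  unfold LeftBrace.star
  rw [one_mul, my_one_eq_zero]
  abel

lemma my_star_pow_zero (a b : A) (h : st a b = 0) (n : ℕ) : st (a ^ n) b = 0 := by
  induction n with
  | zero => rw [pow_zero, my_star_one_left]
  | succ n ih => rw [pow_succ', my_star_mul_left, h, ih, my_star_zero]; abel

lemma my_star_pow (a b c : A) (hab : st a b = c) (hac : st a c = 0) (n : ℕ) :
    st (a ^ n) b = (n : ZMod p) • c := by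
  induction n with
  | zero =>
    rw [pow_zero, my_star_one_left]
    simp
  | succ n ih =>
    rw [pow_succ', my_star_mul_left, hab, ih, my_star_smul, hac]
    push_cast
    module

end StarPow

section Prod
variable {p : ℕ} {A : Type*} [FpBrace p A]

lemma my_prod (P Q R S : A) (y i k : ZMod p)
    (tPP : st P P = 0) (tPS : st P S = 0)
    (tQP : st Q P = 0) (tQQ : st Q Q = -(y • S)) (tQS : st Q S = 0)
    (tRP : st R P = y • S) (tRQ : st R Q = ((2 : ZMod p)⁻¹ * y) • S)
    (tRR : st R R = i • P + k • S) (tRS : st R S = 0)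
    (tSS : st S S = 0)
    (a b c d : ℕ) :
    R ^ a * Q ^ b * P ^ c * S ^ d =
      ((c : ZMod p) + ((a.choose 2 : ℕ) : ZMod p) * i) • P
      + (b : ZMod p) • Q + (a : ZMod p) • R
      + ((d : ZMod p) - ((b.choose 2 : ℕ) : ZMod p) * y + ((a.choose 2 : ℕ) : ZMod p) * k
         + ((a.choose 3 : ℕ) : ZMod p) * (i * y)
         + (b : ZMod p) * (a : ZMod p) * ((2 : ZMod p)⁻¹ * y)
         + (c : ZMod p) * (a : ZMod p) * y) • S := by
  have h1 : P ^ c * S ^ d = (c : ZMod p) • P + (d : ZMod p) • S := by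
    rw [my_mul_eq_add, my_pow_nostar S tSS d, my_star_smul, my_star_pow_zero P S tPS c,
      my_pow_nostar P tPP c, smul_zero, add_zero]
  have h2 : Q ^ b * (P ^ c * S ^ d)
      = (b : ZMod p) • Q - ((b.choose 2 : ℕ) : ZMod p) • y • S
        + (c : ZMod p) • P + (d : ZMod p) • S := by
    rw [h1, my_mul_eq_add, my_star_add, my_star_smul, my_star_smul,
      my_star_pow_zero Q P tQP b, my_star_pow_zero Q S tQS b,
      my_pow_Q Q S y tQQ tQS b]
    module
  have hRy : st R (y • S) = 0 := by rw [my_star_smul, tRS, smul_zero]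
  have hRy2 : st R (((2 : ZMod p)⁻¹ * y) • S) = 0 := by rw [my_star_smul, tRS, smul_zero]
  rw [mul_assoc, mul_assoc, h2, my_mul_eq_add,
    my_star_add, my_star_add, my_star_sub, my_star_smul, my_star_smul, my_star_smul,
    my_star_smul, my_star_smul,
    my_star_pow R Q (((2 : ZMod p)⁻¹ * y) • S) tRQ hRy2 a,
    my_star_pow R P (y • S) tRP hRy a,
    my_star_pow_zero R S tRS a,
    my_pow_R P R S y i k tRR tRP tRS a]
  module

end Prod

/-- in an `𝔽ₚ`-brace with basis `P, Q, R, S` satisfying the Multiplicative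
Table, every element is uniquely `R^α ∘ Q^β ∘ P^γ ∘ S^ξ` with `0 ≤ α, β, γ, ξ < p`. -/
theorem statement14 (p : ℕ) (hp : p.Prime) (hp3 : 3 < p) (A : Type*) [FpBrace p A]
    (P Q R S : A) (B : Module.Basis (Fin 4) (ZMod p) A)
    (hB : B 0 = P ∧ B 1 = Q ∧ B 2 = R ∧ B 3 = S)
    (y i k : ZMod p) (hy : y ≠ 0) (htable : MultTable P Q R S y i k) :
    ∀ a : A, ∃! v : Fin 4 → Fin p,
      a = R ^ (v 0).val * Q ^ (v 1).val * P ^ (v 2).val * S ^ (v 3).val := by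
  haveI : NeZero p := ⟨hp.pos.ne'⟩
  obtain ⟨tPP, tPQ, tPR, tPS, tQP, tQQ, tQR, tQS, tRP, tRQ, tRR, tRS, tSP, tSQ, tSR, tSS⟩ :=
    htable
  have key := my_prod P Q R S y i k tPP tPS tQP tQQ tQS tRP tRQ tRR tRS tSS
  obtain ⟨hB0, hB1, hB2, hB3⟩ := hB
  have coords : ∀ x0 x1 x2 x3 x0' x1' x2' x3' : ZMod p,
      x0 • P + x1 • Q + x2 • R + x3 • S = x0' • P + x1' • Q + x2' • R + x3' • S →
      x0 = x0' ∧ x1 = x1' ∧ x2 = x2' ∧ x3 = x3' := by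
    intro x0 x1 x2 x3 x0' x1' x2' x3' h
    rw [← hB0, ← hB1, ← hB2, ← hB3] at h
    refine ⟨?_, ?_, ?_, ?_⟩
    · have e := congrArg (fun z => B.repr z 0) h
      simpa [Finsupp.single_apply] using e
    · have e := congrArg (fun z => B.repr z 1) h
      simpa [Finsupp.single_apply] using e
    · have e := congrArg (fun z => B.repr z 2) h
      simpa [Finsupp.single_apply] using e
    · have e := congrArg (fun z => B.repr z 3) h
      simpa [Finsupp.single_apply] using e
  have arep : ∀ z : A, z = (B.repr z 0) • P + (B.repr z 1) • Q
      + (B.repr z 2) • R + (B.repr z 3) • S := by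
    intro z
    rw [← hB0, ← hB1, ← hB2, ← hB3]
    have h := B.sum_repr z
    rw [Fin.sum_univ_four] at h
    exact h.symm
  have hcast : ∀ m : ZMod p, ((m.val : ℕ) : ZMod p) = m := fun m => by
    simp [ZMod.natCast_val, ZMod.cast_id]
  have finext : ∀ u w : Fin p, ((u.val : ZMod p) = (w.val : ZMod p)) → u = w := by
    intro u w h
    ext
    have h2 := congrArg ZMod.val h
    rwa [ZMod.val_cast_of_lt u.isLt, ZMod.val_cast_of_lt w.isLt] at h2
  intro a
  obtain ⟨α, hα⟩ : ∃ α : Fin p, (α.val : ZMod p) = B.repr a 2 :=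
    ⟨⟨(B.repr a 2).val, ZMod.val_lt _⟩, hcast _⟩
  obtain ⟨β, hβ⟩ : ∃ β : Fin p, (β.val : ZMod p) = B.repr a 1 :=
    ⟨⟨(B.repr a 1).val, ZMod.val_lt _⟩, hcast _⟩
  obtain ⟨γ, hγ⟩ : ∃ γ : Fin p,
      (γ.val : ZMod p) = B.repr a 0 - ((α.val.choose 2 : ℕ) : ZMod p) * i :=
    ⟨⟨(B.repr a 0 - ((α.val.choose 2 : ℕ) : ZMod p) * i).val, ZMod.val_lt _⟩, hcast _⟩
  obtain ⟨ξ, hξ⟩ : ∃ ξ : Fin p,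
      (ξ.val : ZMod p) = B.repr a 3 + ((β.val.choose 2 : ℕ) : ZMod p) * y
        - ((α.val.choose 2 : ℕ) : ZMod p) * k - ((α.val.choose 3 : ℕ) : ZMod p) * (i * y)
        - (β.val : ZMod p) * (α.val : ZMod p) * ((2 : ZMod p)⁻¹ * y)
        - (γ.val : ZMod p) * (α.val : ZMod p) * y :=
    ⟨⟨(B.repr a 3 + ((β.val.choose 2 : ℕ) : ZMod p) * y
        - ((α.val.choose 2 : ℕ) : ZMod p) * k - ((α.val.choose 3 : ℕ) : ZMod p) * (i * y)
        - (β.val : ZMod p) * (α.val : ZMod p) * ((2 : ZMod p)⁻¹ * y)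
        - (γ.val : ZMod p) * (α.val : ZMod p) * y).val, ZMod.val_lt _⟩, hcast _⟩
  refine ⟨![α, β, γ, ξ], ?_, ?_⟩
  · show a = R ^ α.val * Q ^ β.val * P ^ γ.val * S ^ ξ.val
    rw [key, arep a]
    match_scalars
    · rw [hγ]; ring
    · rw [hβ]
    · rw [hα]
    · rw [hξ]; ring
  · intro v hv
    rw [key] at hv
    have h := (arep a).symm.trans hv
    obtain ⟨E0, E1, E2, E3⟩ := coords _ _ _ _ _ _ _ _ h
    have e0 : v 0 = α := finext _ _ (E2.symm.trans hα.symm)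
    have e1 : v 1 = β := finext _ _ (E1.symm.trans hβ.symm)
    rw [e0] at E0
    have e2 : v 2 = γ := by
      apply finext
      rw [hγ]
      linear_combination -E0
    rw [e0, e1, e2] at E3
    have e3 : v 3 = ξ := by
      apply finext
      rw [hξ]
      linear_combination -E3
    funext j
    fin_cases j
    · exact e0
    · exact e1
    · exact e2
    · exact e3
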